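/- Consider a sequence of fixed-design clustered linear models indexed by the number of clusters G, and suppose there are constants M, C > 0 such that for every G and every cluster g ≤ G, tr((X_gᵀX_g/N_g)⁻¹) ≤ M and λ_max(Ω_g) ≤ C · N_g (strong within-cluster dependence). Then E‖β̂_G − β‖² ≤ M·C/G for every G; in particular β̂_G → β in L² (hence in probability) as G → ∞, regardless of the cluster sizes N_g. -/

import Mathlib

open MeasureTheory ProbabilityTheory Matrix Filter

/-- Largest eigenvalue of a real symmetric matrix via the Rayleigh quotient. -/
noncomputable def lamMax {n : ℕ} (S : Matrix (Fin n) (Fin n) ℝ) : ℝ :=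
  ⨆ v : {v : Fin n → ℝ // ∑ i, v i ^ 2 = 1}, v.1 ⬝ᵥ S.mulVec v.1

lemma memL2_integrable_mul {α : Type*} [MeasurableSpace α] {μ : Measure α} {f g : α → ℝ}
    (hf : MemLp f 2 μ) (hg : MemLp g 2 μ) : Integrable (fun ω => f ω * g ω) μ := by
  have h1 := (hf.add hg).integrable_sq
  have h2 := hf.integrable_sq
  have h3 := hg.integrable_sq
  have heq : (fun ω => f ω * g ω)
      = fun ω => (2:ℝ)⁻¹ * ((f ω + g ω) ^ 2 - f ω ^ 2 - g ω ^ 2) := by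
    funext ω; ring
  rw [heq]
  exact (((h1.sub h2).sub h3).const_mul _)

lemma rayleigh_le {n : ℕ} (S : Matrix (Fin n) (Fin n) ℝ) (v : Fin n → ℝ) :
    v ⬝ᵥ S.mulVec v ≤ lamMax S * ∑ i, v i ^ 2 := by
  have hbdd : BddAbove (Set.range fun u : {v : Fin n → ℝ // ∑ i, v i ^ 2 = 1} =>
      u.1 ⬝ᵥ S.mulVec u.1) := by
    refine ⟨∑ i, ∑ j, |S i j|, ?_⟩
    rintro x ⟨u, rfl⟩
    have habs : ∀ i, |u.1 i| ≤ 1 := by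
      intro i
      have h1 : u.1 i ^ 2 ≤ 1 := by
        calc u.1 i ^ 2 ≤ ∑ j, u.1 j ^ 2 :=
              Finset.single_le_sum (fun j _ => sq_nonneg (u.1 j)) (Finset.mem_univ i)
          _ = 1 := u.2
      nlinarith [abs_nonneg (u.1 i), sq_abs (u.1 i)]
    calc u.1 ⬝ᵥ S.mulVec u.1 = ∑ i, ∑ j, u.1 i * (S i j * u.1 j) := by
          simp [dotProduct, Matrix.mulVec, Finset.mul_sum]
      _ ≤ ∑ i, ∑ j, |S i j| := by
          refine Finset.sum_le_sum fun i _ => Finset.sum_le_sum fun j _ => ?_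
          have h0 : |u.1 i * (S i j * u.1 j)| = |u.1 i| * (|S i j| * |u.1 j|) := by
            rw [abs_mul, abs_mul]
          have h2 := le_abs_self (u.1 i * (S i j * u.1 j))
          have h3 : |u.1 i| * (|S i j| * |u.1 j|) ≤ 1 * (|S i j| * 1) := by
            gcongr
            · exact habs i
            · exact habs j
          rw [h0] at h2
          linarith
  have hcnonneg : (0:ℝ) ≤ ∑ i, v i ^ 2 := Finset.sum_nonneg fun i _ => sq_nonneg _
  rcases eq_or_lt_of_le hcnonneg with h0 | hpos
  · have hv : v = 0 := by
      funext i
      have := (Finset.sum_eq_zero_iff_of_nonneg (fun j _ => sq_nonneg (v j))).1 h0.symm i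
        (Finset.mem_univ i)
      exact pow_eq_zero_iff (two_ne_zero) |>.1 this
    rw [hv]
    simp
  · set c : ℝ := ∑ i, v i ^ 2 with hc
    set u : Fin n → ℝ := (Real.sqrt c)⁻¹ • v with hu
    have hcne : c ≠ 0 := ne_of_gt hpos
    have hinv2 : ((Real.sqrt c)⁻¹) ^ 2 = c⁻¹ := by
      rw [inv_pow, Real.sq_sqrt hpos.le]
    have hu1 : ∑ i, u i ^ 2 = 1 := by
      have : ∑ i, u i ^ 2 = ((Real.sqrt c)⁻¹) ^ 2 * ∑ i, v i ^ 2 := by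
        simp [hu, Pi.smul_apply, smul_eq_mul, mul_pow, Finset.mul_sum]
      rw [this, hinv2, ← hc, inv_mul_cancel₀ hcne]
    have hle : u ⬝ᵥ S.mulVec u ≤ lamMax S := le_ciSup hbdd ⟨u, hu1⟩
    have hquad : u ⬝ᵥ S.mulVec u = c⁻¹ * (v ⬝ᵥ S.mulVec v) := by
      rw [hu, Matrix.mulVec_smul, smul_dotProduct, dotProduct_smul, smul_eq_mul, smul_eq_mul,
        ← mul_assoc, ← sq, hinv2]
    have : v ⬝ᵥ S.mulVec v = c * (u ⬝ᵥ S.mulVec u) := by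
      rw [hquad, ← mul_assoc, mul_inv_cancel₀ hcne, one_mul]
    rw [this]
    calc c * (u ⬝ᵥ S.mulVec u) ≤ c * lamMax S := by
          exact mul_le_mul_of_nonneg_left hle hpos.le
      _ = lamMax S * c := mul_comm _ _

/-- paper's Theorem 1, strong-dependence case, with the
`√G`-consistency rate of the Corollary.  Along a sequence of fixed-design
clustered linear models indexed by the number of clusters `G`, if
`tr((X_gᵀX_g/N_g)⁻¹) ≤ M` and `λ_max(Ω_g) ≤ C·N_g` uniformly, then
`E‖β̂_G − β‖² ≤ M·C/G` for every `G ≥ 1`; in particular `β̂_G → β` in `L²`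
(hence in probability) as `G → ∞`, regardless of the cluster sizes. -/
theorem stmt4 {Ωs : Type*} [MeasurableSpace Ωs] (μ : Measure Ωs) [IsProbabilityMeasure μ]
    (k : ℕ) (β : Fin k → ℝ)
    (N : (G : ℕ) → Fin G → ℕ) (hN : ∀ G g, 1 ≤ N G g)
    (X : (G : ℕ) → (g : Fin G) → Matrix (Fin (N G g)) (Fin k) ℝ)
    (hX : ∀ G g, IsUnit ((X G g)ᵀ * X G g).det)
    (ε : (G : ℕ) → (g : Fin G) → Ωs → (Fin (N G g) → ℝ))
    (hmeas : ∀ G g, Measurable (ε G g))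
    (hL2 : ∀ G g i, Integrable (fun ω => (ε G g ω i) ^ 2) μ)
    (hmean : ∀ G g i, ∫ ω, ε G g ω i ∂μ = 0)
    (hindep : ∀ G, iIndepFun (ε G) μ)
    (Ωm : (G : ℕ) → (g : Fin G) → Matrix (Fin (N G g)) (Fin (N G g)) ℝ)
    (hΩ : ∀ G g i j, Ωm G g i j = ∫ ω, ε G g ω i * ε G g ω j ∂μ)
    (M C : ℝ) (hM : 0 < M) (hC : 0 < C)
    (hTr : ∀ G g, Matrix.trace ((((N G g : ℝ))⁻¹ • ((X G g)ᵀ * X G g))⁻¹) ≤ M)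
    (hEig : ∀ G g, lamMax (Ωm G g) ≤ C * (N G g : ℝ))
    (betaHat : (G : ℕ) → Ωs → (Fin k → ℝ))
    (hbetaHat : ∀ G ω, betaHat G ω =
      (G : ℝ)⁻¹ • ∑ g, (((X G g)ᵀ * X G g)⁻¹).mulVec
        ((X G g)ᵀ.mulVec ((X G g).mulVec β + ε G g ω))) :
    (∀ G : ℕ, 1 ≤ G →
      ∫ ω, ∑ i, (betaHat G ω i - β i) ^ 2 ∂μ ≤ M * C / (G : ℝ)) ∧
    Tendsto (fun G : ℕ => ∫ ω, ∑ i, (betaHat G ω i - β i) ^ 2 ∂μ) atTop (nhds 0) ∧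
    (∀ η : ℝ, 0 < η →
      Tendsto (fun G : ℕ => μ {ω | η ≤ Real.sqrt (∑ i, (betaHat G ω i - β i) ^ 2)})
        atTop (nhds 0)) := by
  classical
  have core : ∀ G : ℕ, 1 ≤ G →
      Integrable (fun ω => ∑ i, (betaHat G ω i - β i) ^ 2) μ ∧
      ∫ ω, ∑ i, (betaHat G ω i - β i) ^ 2 ∂μ ≤ M * C / (G : ℝ) := by
    intro G hG
    have hGpos : (0:ℝ) < (G:ℝ) := by exact_mod_cast hG
    have hGne : (G:ℝ) ≠ 0 := ne_of_gt hGpos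
    set A : (g : Fin G) → Matrix (Fin k) (Fin (N G g)) ℝ :=
      fun g => ((X G g)ᵀ * X G g)⁻¹ * (X G g)ᵀ with hA
    set Z : (g : Fin G) → Fin k → Ωs → ℝ :=
      fun g i ω => ∑ j, A g i j * ε G g ω j with hZdef
    have hεmemb : ∀ (g : Fin G) j, MemLp (fun ω => ε G g ω j) 2 μ := fun g j =>
      (memLp_two_iff_integrable_sq
        ((measurable_pi_apply j).comp (hmeas G g)).aestronglyMeasurable).2 (hL2 G g j)
    have hZmem : ∀ g i, MemLp (Z g i) 2 μ := by
      intro g i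
      simp only [hZdef]
      exact memLp_finset_sum _ fun j _ => (hεmemb g j).const_mul (A g i j)
    have hZint : ∀ g i, Integrable (Z g i) μ := fun g i => (hZmem g i).integrable one_le_two
    have hZmean : ∀ g i, ∫ ω, Z g i ω ∂μ = 0 := by
      intro g i
      simp only [hZdef]
      rw [integral_finset_sum _ fun j _ =>
        ((hεmemb g j).integrable one_le_two).const_mul (A g i j)]
      refine Finset.sum_eq_zero fun j _ => ?_
      rw [integral_const_mul, hmean G g j, mul_zero]
    have hIprod : ∀ (g h : Fin G) i, Integrable (fun ω => Z g i ω * Z h i ω) μ :=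
      fun g h i => memL2_integrable_mul (hZmem g i) (hZmem h i)
    have hZsq : ∀ g i, ∫ ω, Z g i ω * Z g i ω ∂μ
        = ∑ j, ∑ l, A g i j * A g i l * Ωm G g j l := by
      intro g i
      have h1 : ∀ ω, Z g i ω * Z g i ω
          = ∑ j, ∑ l, (A g i j * A g i l) * (ε G g ω j * ε G g ω l) := by
        intro ω
        simp only [hZdef]
        rw [Finset.sum_mul_sum]
        exact Finset.sum_congr rfl fun j _ => Finset.sum_congr rfl fun l _ => by ring
      simp only [h1]
      rw [integral_finset_sum _ fun j _ => integrable_finset_sum _ fun l _ =>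
        (memL2_integrable_mul (hεmemb g j) (hεmemb g l)).const_mul _]
      refine Finset.sum_congr rfl fun j _ => ?_
      rw [integral_finset_sum _ fun l _ =>
        (memL2_integrable_mul (hεmemb g j) (hεmemb g l)).const_mul _]
      refine Finset.sum_congr rfl fun l _ => ?_
      rw [integral_const_mul, ← hΩ G g j l]
    have hcross : ∀ g h : Fin G, g ≠ h → ∀ i, ∫ ω, Z g i ω * Z h i ω ∂μ = 0 := by
      intro g h hgh i
      have hind : IndepFun (ε G g) (ε G h) μ := (hindep G).indepFun hgh
      have hφ : ∀ (g' : Fin G) (i : Fin k),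
          Measurable fun v : Fin (N G g') → ℝ => ∑ j, A g' i j * v j := fun g' i =>
        Finset.measurable_sum _ fun j _ => (measurable_pi_apply j).const_mul _
      have hZind : IndepFun (Z g i) (Z h i) μ := hind.comp (hφ g i) (hφ h i)
      have h2 := hZind.integral_fun_mul_eq_mul_integral (hZint g i).aestronglyMeasurable
        (hZint h i).aestronglyMeasurable
      rw [hZmean g i, zero_mul] at h2
      exact h2
    have hquad : ∀ g : Fin G, ∑ i, ∑ j, ∑ l, A g i j * A g i l * Ωm G g j l ≤ M * C := by
      intro g
      have hNpos : (0:ℝ) < (N G g : ℝ) := by exact_mod_cast hN G g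
      have hBsymm : ((X G g)ᵀ * X G g)ᵀ = (X G g)ᵀ * X G g := by
        rw [Matrix.transpose_mul, Matrix.transpose_transpose]
      have hBtinv : (((X G g)ᵀ * X G g)⁻¹)ᵀ = ((X G g)ᵀ * X G g)⁻¹ := by
        rw [Matrix.transpose_nonsing_inv, hBsymm]
      have hB : A g * (A g)ᵀ = ((X G g)ᵀ * X G g)⁻¹ := by
        show (((X G g)ᵀ * X G g)⁻¹ * (X G g)ᵀ) * (((X G g)ᵀ * X G g)⁻¹ * (X G g)ᵀ)ᵀ
            = ((X G g)ᵀ * X G g)⁻¹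
        rw [Matrix.transpose_mul, Matrix.transpose_transpose, hBtinv]
        rw [Matrix.mul_assoc, ← Matrix.mul_assoc ((X G g)ᵀ),
          Matrix.mul_nonsing_inv _ (hX G g), Matrix.mul_one]
      have htr : Matrix.trace (((X G g)ᵀ * X G g)⁻¹) = ∑ i, ∑ j, (A g i j) ^ 2 := by
        rw [← hB]
        simp [Matrix.trace, Matrix.diag, Matrix.mul_apply, Matrix.transpose_apply, sq]
      have hTrB : ∑ i, ∑ j, (A g i j) ^ 2 ≤ M / (N G g : ℝ) := by
        have hsmul : (((N G g : ℝ))⁻¹ • ((X G g)ᵀ * X G g))⁻¹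
            = (N G g : ℝ) • ((X G g)ᵀ * X G g)⁻¹ := by
          apply Matrix.inv_eq_right_inv
          rw [Matrix.smul_mul, Matrix.mul_smul, smul_smul,
            inv_mul_cancel₀ (ne_of_gt hNpos), one_smul, Matrix.mul_nonsing_inv _ (hX G g)]
        have h := hTr G g
        rw [hsmul, Matrix.trace_smul, htr, smul_eq_mul] at h
        rw [le_div_iff₀ hNpos]
        linarith
      have hrow : ∀ i : Fin k, ∑ j, ∑ l, A g i j * A g i l * Ωm G g j l
          ≤ lamMax (Ωm G g) * ∑ j, (A g i j) ^ 2 := by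
        intro i
        have heq : ∑ j, ∑ l, A g i j * A g i l * Ωm G g j l
            = (fun j => A g i j) ⬝ᵥ (Ωm G g).mulVec (fun j => A g i j) := by
          simp only [dotProduct, Matrix.mulVec, Finset.mul_sum]
          exact Finset.sum_congr rfl fun j _ => Finset.sum_congr rfl fun l _ => by ring
        rw [heq]
        exact rayleigh_le _ _
      have hsqnn : (0:ℝ) ≤ ∑ i, ∑ j, (A g i j) ^ 2 :=
        Finset.sum_nonneg fun i _ => Finset.sum_nonneg fun j _ => sq_nonneg _
      calc ∑ i, ∑ j, ∑ l, A g i j * A g i l * Ωm G g j l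
          ≤ ∑ i, lamMax (Ωm G g) * ∑ j, (A g i j) ^ 2 := Finset.sum_le_sum fun i _ => hrow i
        _ = lamMax (Ωm G g) * ∑ i, ∑ j, (A g i j) ^ 2 := by rw [Finset.mul_sum]
        _ ≤ (C * (N G g : ℝ)) * ∑ i, ∑ j, (A g i j) ^ 2 :=
            mul_le_mul_of_nonneg_right (hEig G g) hsqnn
        _ ≤ (C * (N G g : ℝ)) * (M / (N G g : ℝ)) :=
            mul_le_mul_of_nonneg_left hTrB (by positivity)
        _ = M * C := by
            field_simp
    have hdiff : ∀ ω (i : Fin k), betaHat G ω i - β i = (G:ℝ)⁻¹ * ∑ g, Z g i ω := by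
      intro ω i
      have hterm : ∀ g : Fin G,
          (((X G g)ᵀ * X G g)⁻¹).mulVec ((X G g)ᵀ.mulVec ((X G g).mulVec β + ε G g ω))
            = β + fun i' => Z g i' ω := by
        intro g
        rw [Matrix.mulVec_add, Matrix.mulVec_add]
        congr 1
        · rw [Matrix.mulVec_mulVec, Matrix.mulVec_mulVec, Matrix.mul_assoc,
            Matrix.nonsing_inv_mul _ (hX G g), Matrix.one_mulVec]
        · rw [Matrix.mulVec_mulVec]
          funext i'
          simp [hZdef, hA, Matrix.mulVec, dotProduct]
      have hcomp : ∀ g : Fin G,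
          (((X G g)ᵀ * X G g)⁻¹).mulVec ((X G g)ᵀ.mulVec ((X G g).mulVec β + ε G g ω)) i
            = β i + Z g i ω := by
        intro g
        rw [hterm g]
        rfl
      rw [hbetaHat]
      simp only [Pi.smul_apply, Finset.sum_apply, smul_eq_mul]
      rw [Finset.sum_congr rfl fun g _ => hcomp g, Finset.sum_add_distrib, Finset.sum_const,
        Finset.card_univ, Fintype.card_fin, nsmul_eq_mul]
      field_simp
      ring
    have hint_eq : ∀ ω, ∑ i, (betaHat G ω i - β i) ^ 2
        = ((G:ℝ)⁻¹) ^ 2 * ∑ i, ∑ g, ∑ h : Fin G, Z g i ω * Z h i ω := by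
      intro ω
      simp only [hdiff, mul_pow]
      rw [Finset.mul_sum]
      refine Finset.sum_congr rfl fun i _ => ?_
      congr 1
      rw [sq, Finset.sum_mul_sum]
    have hInt2 : Integrable (fun ω => ∑ i, ∑ g, ∑ h : Fin G, Z g i ω * Z h i ω) μ :=
      integrable_finset_sum _ fun i _ => integrable_finset_sum _ fun g _ =>
        integrable_finset_sum _ fun h _ => hIprod g h i
    have hIntegrable : Integrable (fun ω => ∑ i, (betaHat G ω i - β i) ^ 2) μ :=
      (hInt2.const_mul (((G:ℝ)⁻¹) ^ 2)).congr (ae_of_all _ fun ω => (hint_eq ω).symm)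
    refine ⟨hIntegrable, ?_⟩
    have hval : ∫ ω, ∑ i, (betaHat G ω i - β i) ^ 2 ∂μ
        = ((G:ℝ)⁻¹) ^ 2 * ∑ i, ∑ g, ∑ h : Fin G, ∫ ω, Z g i ω * Z h i ω ∂μ := by
      rw [integral_congr_ae (ae_of_all _ hint_eq), integral_const_mul]
      congr 1
      rw [integral_finset_sum _ fun i _ => integrable_finset_sum _ fun g _ =>
        integrable_finset_sum _ fun h _ => hIprod g h i]
      refine Finset.sum_congr rfl fun i _ => ?_
      rw [integral_finset_sum _ fun g _ => integrable_finset_sum _ fun h _ => hIprod g h i]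
      refine Finset.sum_congr rfl fun g _ => ?_
      rw [integral_finset_sum _ fun h _ => hIprod g h i]
    have hdiag : ∀ (i : Fin k) (g : Fin G),
        ∑ h : Fin G, ∫ ω, Z g i ω * Z h i ω ∂μ = ∫ ω, Z g i ω * Z g i ω ∂μ := by
      intro i g
      exact Finset.sum_eq_single g (fun h _ hne => hcross g h (Ne.symm hne) i)
        (fun hx => absurd (Finset.mem_univ g) hx)
    have hbound : ∑ i, ∑ g : Fin G, ∫ ω, Z g i ω * Z g i ω ∂μ ≤ (G:ℝ) * (M * C) := by
      rw [Finset.sum_comm]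
      calc ∑ g : Fin G, ∑ i, ∫ ω, Z g i ω * Z g i ω ∂μ
          = ∑ g : Fin G, ∑ i, ∑ j, ∑ l, A g i j * A g i l * Ωm G g j l :=
            Finset.sum_congr rfl fun g _ => Finset.sum_congr rfl fun i _ => hZsq g i
        _ ≤ ∑ _g : Fin G, M * C := Finset.sum_le_sum fun g _ => hquad g
        _ = (G:ℝ) * (M * C) := by
            rw [Finset.sum_const, Finset.card_univ, Fintype.card_fin, nsmul_eq_mul]
    calc ∫ ω, ∑ i, (betaHat G ω i - β i) ^ 2 ∂μ
        = ((G:ℝ)⁻¹) ^ 2 * ∑ i, ∑ g : Fin G, ∫ ω, Z g i ω * Z g i ω ∂μ := by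
          rw [hval]
          congr 1
          exact Finset.sum_congr rfl fun i _ => Finset.sum_congr rfl fun g _ => hdiag i g
      _ ≤ ((G:ℝ)⁻¹) ^ 2 * ((G:ℝ) * (M * C)) := mul_le_mul_of_nonneg_left hbound (by positivity)
      _ = M * C / (G:ℝ) := by
          field_simp
  refine ⟨fun G hG => (core G hG).2, ?_, ?_⟩
  · exact squeeze_zero' (Eventually.of_forall fun G =>
      integral_nonneg fun ω => Finset.sum_nonneg fun i _ => sq_nonneg _)
      ((eventually_ge_atTop 1).mono fun G hG => (core G hG).2)
      (tendsto_const_div_atTop_nhds_zero_nat (M * C))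
  · intro η hη
    have hub : ∀ᶠ G : ℕ in atTop,
        μ {ω | η ≤ Real.sqrt (∑ i, (betaHat G ω i - β i) ^ 2)}
          ≤ ENNReal.ofReal (M * C / η ^ 2 / (G:ℝ)) := by
      filter_upwards [eventually_ge_atTop 1] with G hG
      obtain ⟨hint, hbnd⟩ := core G hG
      have hsetEq : {ω | η ≤ Real.sqrt (∑ i, (betaHat G ω i - β i) ^ 2)}
          = {ω | η ^ 2 ≤ ∑ i, (betaHat G ω i - β i) ^ 2} := by
        ext ω
        simp only [Set.mem_setOf_eq]
        rw [Real.le_sqrt hη.le (Finset.sum_nonneg fun i _ => sq_nonneg _)]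
      rw [hsetEq]
      have hmar := mul_meas_ge_le_integral_of_nonneg
        (ae_of_all μ (fun ω => Finset.sum_nonneg fun i _ =>
          sq_nonneg (betaHat G ω i - β i)) :
          (0 : Ωs → ℝ) ≤ᵐ[μ] fun ω => ∑ i, (betaHat G ω i - β i) ^ 2) hint (η ^ 2)
      have hη2 : (0:ℝ) < η ^ 2 := by positivity
      have hto : (μ {ω | η ^ 2 ≤ ∑ i, (betaHat G ω i - β i) ^ 2}).toReal
          ≤ M * C / η ^ 2 / (G:ℝ) := by
        have h1 : η ^ 2 * (μ {ω | η ^ 2 ≤ ∑ i, (betaHat G ω i - β i) ^ 2}).toReal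
            ≤ M * C / (G:ℝ) := hmar.trans hbnd
        set t := (μ {ω | η ^ 2 ≤ ∑ i, (betaHat G ω i - β i) ^ 2}).toReal with ht
        calc t = (η ^ 2 * t) / η ^ 2 := by field_simp
          _ ≤ (M * C / (G:ℝ)) / η ^ 2 := by gcongr
          _ = M * C / η ^ 2 / (G:ℝ) := by ring
      calc μ {ω | η ^ 2 ≤ ∑ i, (betaHat G ω i - β i) ^ 2}
          = ENNReal.ofReal (μ {ω | η ^ 2 ≤ ∑ i, (betaHat G ω i - β i) ^ 2}).toReal :=
            (ENNReal.ofReal_toReal (measure_ne_top μ _)).symm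
        _ ≤ ENNReal.ofReal (M * C / η ^ 2 / (G:ℝ)) := ENNReal.ofReal_le_ofReal hto
    have hlim : Tendsto (fun G : ℕ => ENNReal.ofReal (M * C / η ^ 2 / (G:ℝ))) atTop (nhds 0) := by
      have h0 : Tendsto (fun G : ℕ => M * C / η ^ 2 / (G:ℝ)) atTop (nhds 0) :=
        tendsto_const_div_atTop_nhds_zero_nat _
      simpa using ENNReal.tendsto_ofReal h0
    exact tendsto_of_tendsto_of_tendsto_of_le_of_le' tendsto_const_nhds hlim
      (Eventually.of_forall fun G => bot_le) hub
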